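/- For each character χ of G and each i ∈ Fin n set c_χ(i) = ∑_{t ∈ G, x t = i} χ(t). Then the equality ∑_i (w i) · |c_χ(i)|² = ∑_i (w i) · (h i)² holds for every character χ of G if and only if h i ≤ 1 for all i ∈ Fin n. (This is the equality criterion of the paper's Lemma (lem:stab1), characterizing the semistable range by the condition that the class map is injective on each fiber.) -/

import Mathlib

open Finset

/-- If `a b : ℂ` have absolute value 1 and `a ≠ b`, then `|a + b| < 2`. -/
lemma abs_add_lt_two_of_ne {a b : ℂ} (ha : ‖a‖ = 1) (hb : ‖b‖ = 1)
    (hab : a ≠ b) : ‖a + b‖ < 2 := by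
  have hre : (a * (starRingEnd ℂ) b).re < 1 := by
    have habs : ‖a * (starRingEnd ℂ) b‖ = 1 := by
      simp [map_mul, ha, hb]
    rcases lt_or_eq_of_le ((Complex.re_le_norm _).trans_eq habs) with h | h
    · exact h
    · exfalso
      have him : (a * (starRingEnd ℂ) b).im = 0 := by
        have := Complex.sq_norm (a * (starRingEnd ℂ) b)
        rw [habs, Complex.normSq_apply, ← h] at this
        nlinarith
      have : a * (starRingEnd ℂ) b = 1 := by
        apply Complex.ext <;> simp [him, ← h]
      apply hab
      have hbne : b ≠ 0 := by
        intro h0; rw [h0] at hb; simp at hb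
      have hbconj : (starRingEnd ℂ) b = b⁻¹ := by
        rw [Complex.inv_def, Complex.normSq_eq_norm_sq, hb]
        simp
      rw [hbconj, mul_inv_eq_one₀ hbne] at this
      exact this
  have h2 : ‖a + b‖ ^ 2 < 4 := by
    have := Complex.sq_norm (a + b)
    rw [Complex.normSq_add] at this
    rw [Complex.normSq_eq_norm_sq, Complex.normSq_eq_norm_sq, ha, hb] at this
    rw [this]
    nlinarith
  nlinarith [norm_nonneg (a + b)]

/-- For each character `χ` of `G` and each `i`, set
`c_χ(i) = ∑_{t ∈ G, x t = i} χ(t)`.  Then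
`∑_i (w i) |c_χ(i)|² = ∑_i (w i) (h i)²` holds for every character `χ` of `G`
if and only if `h i ≤ 1` for all `i`, where `h i = #{t ∈ G : x t = i}`. -/
theorem twisted_height_pairing_eq_iff_semistable
    (n : ℕ) (hn : 1 ≤ n) (w : Fin n → ℝ) (hw : ∀ i, 0 < w i)
    (G : Type*) [CommGroup G] [Fintype G]
    (x : G → Fin n) :
    (∀ χ : G →* ℂˣ,
      ∑ i, w i *
          ‖∑ t ∈ Finset.univ.filter (fun t : G => x t = i), ((χ t : ℂ))‖ ^ 2
        = ∑ i, w i * ((Finset.univ.filter (fun t : G => x t = i)).card : ℝ) ^ 2)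
    ↔ (∀ i, (Finset.univ.filter (fun t : G => x t = i)).card ≤ 1) := by
  classical
  have habs : ∀ (χ : G →* ℂˣ) (t : G), ‖(χ t : ℂ)‖ = 1 := by
    intro χ t
    have hpow : ((χ t : ℂ)) ^ Fintype.card G = 1 := by
      have : (χ t) ^ Fintype.card G = 1 := by
        rw [← map_pow, pow_card_eq_one, map_one]
      calc ((χ t : ℂ)) ^ Fintype.card G = (((χ t) ^ Fintype.card G : ℂˣ) : ℂ) := by
            push_cast; ring
        _ = 1 := by rw [this]; simp
    exact Complex.norm_eq_one_of_pow_eq_one hpow Fintype.card_ne_zero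
  constructor
  · intro heq
    by_contra hcon
    push_neg at hcon
    obtain ⟨i0, hi0⟩ := hcon
    -- two distinct elements in the fiber of i0
    obtain ⟨t1, ht1, t2, ht2, hne⟩ := Finset.one_lt_card.mp hi0
    -- a character separating t1 and t2
    have hexp : NeZero (Monoid.exponent G) :=
      ⟨(Monoid.ExponentExists.of_finite.exponent_pos).ne'⟩
    obtain ⟨χ, hχ⟩ := CommGroup.exists_apply_ne_one_of_hasEnoughRootsOfUnity G ℂ
      (a := t1 * t2⁻¹) (by
        intro h
        apply hne
        rw [mul_inv_eq_one] at h
        exact h)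
    have hχne : (χ t1 : ℂ) ≠ (χ t2 : ℂ) := by
      intro h
      apply hχ
      have : χ t1 = χ t2 := Units.ext h
      rw [map_mul, map_inv, this, mul_inv_cancel]
    -- general bound
    have hbound : ∀ i, ‖∑ t ∈ Finset.univ.filter (fun t : G => x t = i), ((χ t : ℂ))‖
        ≤ ((Finset.univ.filter (fun t : G => x t = i)).card : ℝ) := by
      intro i
      calc ‖∑ t ∈ Finset.univ.filter (fun t : G => x t = i), ((χ t : ℂ))‖
          ≤ ∑ t ∈ Finset.univ.filter (fun t : G => x t = i), ‖(χ t : ℂ)‖ :=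
            norm_sum_le _ _
        _ = ((Finset.univ.filter (fun t : G => x t = i)).card : ℝ) := by
            simp [habs χ]
    -- strict bound at i0
    have hstrict : ‖∑ t ∈ Finset.univ.filter (fun t : G => x t = i0), ((χ t : ℂ))‖
        < ((Finset.univ.filter (fun t : G => x t = i0)).card : ℝ) := by
      set s := Finset.univ.filter (fun t : G => x t = i0) with hs
      have hsub : ({t1, t2} : Finset G) ⊆ s := by
        intro a ha
        simp only [Finset.mem_insert, Finset.mem_singleton] at ha
        rcases ha with rfl | rfl
        exacts [ht1, ht2]
      have hsplit : ∑ t ∈ s, ((χ t : ℂ))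
          = (∑ t ∈ s \ {t1, t2}, ((χ t : ℂ))) + ((χ t1 : ℂ) + (χ t2 : ℂ)) := by
        rw [← Finset.sum_sdiff hsub, Finset.sum_pair hne]
      have hcard2 : ({t1, t2} : Finset G).card = 2 := Finset.card_pair hne
      have hrest : ‖∑ t ∈ s \ {t1, t2}, ((χ t : ℂ))‖
          ≤ ((s \ {t1, t2}).card : ℝ) := by
        calc ‖∑ t ∈ s \ {t1, t2}, ((χ t : ℂ))‖
            ≤ ∑ t ∈ s \ {t1, t2}, ‖(χ t : ℂ)‖ := norm_sum_le _ _
          _ = _ := by simp [habs χ]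
      have hpairlt : ‖(χ t1 : ℂ) + (χ t2 : ℂ)‖ < 2 :=
        abs_add_lt_two_of_ne (habs χ t1) (habs χ t2) hχne
      have hcards : (s \ {t1, t2}).card = s.card - 2 := by
        rw [Finset.card_sdiff_of_subset hsub, hcard2]
      have h2le : 2 ≤ s.card := hi0
      calc ‖∑ t ∈ s, ((χ t : ℂ))‖
          ≤ ‖∑ t ∈ s \ {t1, t2}, ((χ t : ℂ))‖
            + ‖(χ t1 : ℂ) + (χ t2 : ℂ)‖ := by
            rw [hsplit]; exact norm_add_le _ _
        _ < ((s \ {t1, t2}).card : ℝ) + 2 := by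
            apply add_lt_add_of_le_of_lt hrest hpairlt
        _ = (s.card : ℝ) := by
            rw [hcards]
            have : ((s.card - 2 : ℕ) : ℝ) = (s.card : ℝ) - 2 := by
              have := Nat.cast_sub (R := ℝ) h2le
              simpa using this
            rw [this]; ring
    -- contradiction with the equality for χ
    have hlt : ∑ i, w i *
          ‖∑ t ∈ Finset.univ.filter (fun t : G => x t = i), ((χ t : ℂ))‖ ^ 2
        < ∑ i, w i * ((Finset.univ.filter (fun t : G => x t = i)).card : ℝ) ^ 2 := by
      apply Finset.sum_lt_sum
      · intro i _
        exact mul_le_mul_of_nonneg_left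
          (pow_le_pow_left₀ (norm_nonneg _) (hbound i) 2) (hw i).le
      · refine ⟨i0, Finset.mem_univ i0, ?_⟩
        exact mul_lt_mul_of_pos_left
          (pow_lt_pow_left₀ hstrict (norm_nonneg _) (by norm_num)) (hw i0)
    exact absurd (heq χ) hlt.ne
  · intro hcard χ
    apply Finset.sum_congr rfl
    intro i _
    congr 1
    rcases Nat.le_one_iff_eq_zero_or_eq_one.mp (hcard i) with h | h
    · rw [Finset.card_eq_zero.mp h]
      simp
    · obtain ⟨t, ht⟩ := Finset.card_eq_one.mp h
      rw [ht]
      simp [habs χ t]
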